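/- If xy ∈ B_n \ {0}, then x ∈ B_n \ {0}, where B_n is the set of Gaussian integers expressible as Σ_{j=0}^n v_j(1+i)^j with each v_j ∈ {0, ±1, ±i}. That is, the sets B_n \ {0} are closed under taking divisors. -/

import Mathlib

def Bset (n : ℕ) : Set GaussianInt :=
  {z | ∃ v : ℕ → GaussianInt,
    (∀ j, v j ∈ ({0, 1, -1, ⟨0, 1⟩, ⟨0, -1⟩} : Set GaussianInt)) ∧
    z = ∑ j ∈ Finset.range (n + 1), v j * (⟨1, 1⟩ : GaussianInt) ^ j}

namespace BsetAux

def Dig : Set GaussianInt := {0, 1, -1, ⟨0, 1⟩, ⟨0, -1⟩}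

lemma dig_iff (z : GaussianInt) :
    z ∈ Dig ↔ z = 0 ∨ z = 1 ∨ z = -1 ∨ z = ⟨0,1⟩ ∨ z = ⟨0,-1⟩ := by
  simp [Dig, Set.mem_insert_iff, Set.mem_singleton_iff]

lemma mem_Bset_iff (n : ℕ) (z : GaussianInt) :
    z ∈ Bset n ↔ ∃ v : ℕ → GaussianInt, (∀ j, v j ∈ Dig) ∧
      z = ∑ j ∈ Finset.range (n + 1), v j * (⟨1, 1⟩ : GaussianInt) ^ j := Iff.rfl

lemma dig_mul {a b : GaussianInt} (ha : a ∈ Dig) (hb : b ∈ Dig) : a * b ∈ Dig := by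
  rw [dig_iff] at *
  rcases ha with rfl|rfl|rfl|rfl|rfl <;> rcases hb with rfl|rfl|rfl|rfl|rfl <;> decide

lemma dig_star {a : GaussianInt} (ha : a ∈ Dig) : star a ∈ Dig := by
  rw [dig_iff] at *
  rcases ha with rfl|rfl|rfl|rfl|rfl <;> decide

lemma negI_mem_dig : (⟨0,-1⟩ : GaussianInt) ∈ Dig := by rw [dig_iff]; tauto
lemma I_mem_dig : (⟨0,1⟩ : GaussianInt) ∈ Dig := by rw [dig_iff]; tauto
lemma one_mem_dig : (1 : GaussianInt) ∈ Dig := by rw [dig_iff]; tauto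
lemma negone_mem_dig : (-1 : GaussianInt) ∈ Dig := by rw [dig_iff]; tauto
lemma zero_mem_dig : (0 : GaussianInt) ∈ Dig := by rw [dig_iff]; tauto

lemma zero_mem (n : ℕ) : (0 : GaussianInt) ∈ Bset n :=
  ⟨fun _ => 0, fun _ => zero_mem_dig, by simp⟩

lemma dig_mul_mem {n : ℕ} {ε z : GaussianInt} (hε : ε ∈ Dig) (hz : z ∈ Bset n) :
    ε * z ∈ Bset n := by
  obtain ⟨v, hv, rfl⟩ := hz
  refine ⟨fun j => ε * v j, fun j => dig_mul hε (hv j), ?_⟩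
  rw [Finset.mul_sum]
  exact Finset.sum_congr rfl fun j _ => by dsimp only; rw [mul_assoc]

lemma negI_pow_mem_dig (j : ℕ) : (⟨0,-1⟩ : GaussianInt) ^ j ∈ Dig := by
  induction j with
  | zero => simpa using one_mem_dig
  | succ k ih => rw [pow_succ]; exact dig_mul ih negI_mem_dig

lemma star_mem {n : ℕ} {z : GaussianInt} (hz : z ∈ Bset n) : star z ∈ Bset n := by
  obtain ⟨v, hv, rfl⟩ := hz
  refine ⟨fun j => star (v j) * (⟨0,-1⟩ : GaussianInt) ^ j,
    fun j => dig_mul (dig_star (hv j)) (negI_pow_mem_dig j), ?_⟩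
  rw [star_sum]
  refine Finset.sum_congr rfl fun j _ => ?_
  rw [star_mul', star_pow]
  have h1 : star (⟨1,1⟩ : GaussianInt) = ⟨0,-1⟩ * ⟨1,1⟩ := by decide
  rw [h1, mul_pow]
  ring

lemma neg_mem {n : ℕ} {z : GaussianInt} (hz : z ∈ Bset n) : -z ∈ Bset n := by
  have := dig_mul_mem negone_mem_dig hz
  simpa using this

lemma pair_mem {v0 v1 : GaussianInt} (h0 : v0 ∈ Dig) (h1 : v1 ∈ Dig) :
    v0 + v1 * ⟨1,1⟩ ∈ Bset 1 := by
  refine ⟨fun j => if j = 0 then v0 else if j = 1 then v1 else 0, fun j => ?_, ?_⟩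
  · rcases j with _|_|j
    · simpa [dig_iff] using h0
    · simpa [dig_iff] using h1
    · simpa using zero_mem_dig
  · rw [Finset.sum_range_succ, Finset.sum_range_succ, Finset.sum_range_zero]
    simp [add_comm]

lemma sum_two_peel (f : ℕ → GaussianInt) (m : ℕ) :
    ∑ j ∈ Finset.range (m+3), f j = f 0 + f 1 + ∑ j ∈ Finset.range (m+1), f (j+2) := by
  rw [Finset.sum_range_succ' f (m+2), Finset.sum_range_succ' (fun j => f (j+1)) (m+1)]
  have : ∀ j : ℕ, f (j+1+1) = f (j+2) := fun j => by norm_num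
  rw [Finset.sum_congr rfl fun j _ => this j]
  ring

lemma step_mem {m : ℕ} {v0 v1 t : GaussianInt} (h0 : v0 ∈ Dig) (h1 : v1 ∈ Dig)
    (ht : t ∈ Bset m) : v0 + v1 * ⟨1,1⟩ + 2 * t ∈ Bset (m + 2) := by
  obtain ⟨v, hv, rfl⟩ := ht
  refine ⟨fun j => if j = 0 then v0 else if j = 1 then v1 else ⟨0,-1⟩ * v (j - 2),
    fun j => ?_, ?_⟩
  · rcases j with _|_|j
    · simpa [dig_iff] using h0
    · simpa [dig_iff] using h1
    · show (if j+1+1 = 0 then v0 else if j+1+1 = 1 then v1 else ⟨0,-1⟩ * v (j+1+1-2)) ∈ Dig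
      rw [if_neg (by omega), if_neg (by omega)]
      exact dig_mul negI_mem_dig (hv _)
  · rw [show m + 2 + 1 = m + 3 from rfl, sum_two_peel]
    have key : ∀ j : ℕ,
        (if j+2 = 0 then v0 else if j+2 = 1 then v1 else (⟨0,-1⟩:GaussianInt) * v (j + 2 - 2))
          * (⟨1,1⟩:GaussianInt)^(j+2)
        = 2 * (v j * (⟨1,1⟩:GaussianInt)^j) := by
      intro j
      rw [if_neg (by omega), if_neg (by omega), show j + 2 - 2 = j from by omega, pow_add]
      have h2 : (⟨0,-1⟩ : GaussianInt) * (⟨1,1⟩:GaussianInt)^2 = 2 := by decide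
      calc (⟨0,-1⟩ : GaussianInt) * v j * ((⟨1,1⟩:GaussianInt)^j * (⟨1,1⟩:GaussianInt)^2)
          = ((⟨0,-1⟩ : GaussianInt) * (⟨1,1⟩:GaussianInt)^2) * (v j * (⟨1,1⟩:GaussianInt)^j) := by
            ring
        _ = 2 * (v j * (⟨1,1⟩:GaussianInt)^j) := by rw [h2]
    rw [Finset.sum_congr rfl fun j _ => key j, ← Finset.mul_sum]
    simp

lemma double_mem {m : ℕ} {t : GaussianInt} (ht : t ∈ Bset m) : 2 * t ∈ Bset (m + 2) := by
  have := step_mem zero_mem_dig zero_mem_dig ht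
  simpa using this

lemma pow2_mem {m l : ℕ} {t : GaussianInt} (ht : t ∈ Bset m) : 2^l * t ∈ Bset (m + 2*l) := by
  induction l with
  | zero => simpa using ht
  | succ k ih =>
      have := double_mem ih
      have e : (2:GaussianInt)^(k+1) * t = 2 * (2^k * t) := by ring
      have e2 : m + 2*(k+1) = m + 2*k + 2 := by ring
      rw [e, e2]; exact this

lemma mono_mem {m n : ℕ} (h : m ≤ n) {z : GaussianInt} (hz : z ∈ Bset m) : z ∈ Bset n := by
  obtain ⟨v, hv, rfl⟩ := hz
  refine ⟨fun j => if j ≤ m then v j else 0, fun j => ?_, ?_⟩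
  · by_cases hj : j ≤ m
    · simpa [hj] using hv j
    · simpa [hj] using zero_mem_dig
  · calc ∑ j ∈ Finset.range (m+1), v j * (⟨1,1⟩:GaussianInt)^j
        = ∑ j ∈ Finset.range (m+1),
            (if j ≤ m then v j else 0) * (⟨1,1⟩:GaussianInt)^j := by
          refine Finset.sum_congr rfl fun j hj => ?_
          rw [Finset.mem_range] at hj
          rw [if_pos (by omega)]
      _ = ∑ j ∈ Finset.range (n+1),
            (if j ≤ m then v j else 0) * (⟨1,1⟩:GaussianInt)^j := by
          refine Finset.sum_subset (Finset.range_subset_range.2 (by omega)) ?_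
          intro j _ hj
          rw [Finset.mem_range] at hj
          rw [if_neg (by omega)]
          simp

lemma dig_mem {n : ℕ} {z : GaussianInt} (hz : z ∈ Dig) : z ∈ Bset n := by
  refine mono_mem (Nat.zero_le n) ⟨fun _ => z, fun _ => hz, ?_⟩
  simp






def w (m : ℕ) : ℤ := if Even m then 3 * 2^(m/2) else 4 * 2^(m/2)

lemma w_shape (m : ℕ) : ∃ e : ℤ, 1 ≤ e ∧ (2 ≤ m → 2 ≤ e) ∧
    ((w m = 3*e ∧ w (m+1) = 4*e) ∨ (w m = 4*e ∧ w (m+1) = 6*e)) := by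
  rcases Nat.even_or_odd m with he | ho
  · refine ⟨2^(m/2), one_le_pow₀ (by norm_num), fun h2 => ?_, Or.inl ⟨?_, ?_⟩⟩
    · calc (2:ℤ) = 2^1 := by norm_num
        _ ≤ 2^(m/2) := by
          apply pow_le_pow_right₀ (by norm_num)
          omega
    · simp [w, he]
    · obtain ⟨k, rfl⟩ := he
      have h1 : ¬ Even (k + k + 1) := by simp [Nat.even_add_one, Nat.even_add]
      have h2 : (k+k+1)/2 = (k+k)/2 := by omega
      simp [w, h1, h2]
  · obtain ⟨k, rfl⟩ := ho
    refine ⟨2^k, one_le_pow₀ (by norm_num), fun h2 => ?_, Or.inr ⟨?_, ?_⟩⟩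
    · calc (2:ℤ) = 2^1 := by norm_num
        _ ≤ 2^k := by
          apply pow_le_pow_right₀ (by norm_num)
          omega
    · have h1 : ¬ Even (2*k+1) := by simp [Nat.even_add_one]
      have h2 : (2*k+1)/2 = k := by omega
      simp [w, h1, h2]
    · have h1 : Even (2*k+1+1) := by simp [Nat.even_add_one]
      have h2 : (2*k+1+1)/2 = k+1 := by omega
      simp [w, h1, h2, pow_succ]
      ring
lemma w_facts (m : ℕ) : 3 ≤ w m ∧ w m + 1 ≤ w (m+1) ∧ w (m+1) ≤ 2 * w m - 1 := by
  obtain ⟨e, he, _, h⟩ := w_shape m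
  rcases h with ⟨h1, h2⟩ | ⟨h1, h2⟩ <;> omega

lemma w_two_mul (m : ℕ) : w (m+2) = 2 * w m := by
  have h1 : Even (m+2) ↔ Even m := by simp [Nat.even_add]
  have h2 : (m+2)/2 = m/2 + 1 := by omega
  by_cases he : Even m <;> simp [w, h1, he, h2, pow_succ] <;> ring

def M (m : ℕ) : ℤ := (w m - 2)^2 + (w (m+1) - w m - 1)^2

lemma M_nonneg (m : ℕ) : 0 ≤ M m := add_nonneg (sq_nonneg _) (sq_nonneg _)

lemma M_step (m : ℕ) : 4 * M m ≤ M (m+2) := by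
  have h1 := w_facts m
  have h2 := w_two_mul m
  have h3 := w_two_mul (m+1)
  rw [M, M, h2, show m+2+1 = m+1+2 from rfl, h3]
  nlinarith [h1.1, h1.2.1, h1.2.2]

lemma M_lift (t m : ℕ) : 4^t * M m ≤ M (m + 2*t) := by
  induction t with
  | zero => simp
  | succ k ih =>
      have h := M_step (m + 2*k)
      calc 4^(k+1) * M m = 4 * (4^k * M m) := by ring
        _ ≤ 4 * M (m + 2*k) := by linarith [M_nonneg m, ih]
        _ ≤ M (m + 2*k + 2) := h
        _ = M (m + 2*(k+1)) := by ring_nf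

/-- norm as sum of squares of natAbs -/
lemma norm_eq_natAbs (z : GaussianInt) :
    z.norm = ((z.re.natAbs : ℤ))^2 + ((z.im.natAbs : ℤ))^2 := by
  rw [Zsqrtd.norm_def]
  rw [Int.natAbs_sq z.re, Int.natAbs_sq z.im]
  ring

lemma sq_le_of_le {x y : ℤ} (hy : 0 ≤ y) (h : x^2 ≤ y^2) (hx : 0 ≤ x) : x ≤ y := by
  by_contra h'
  push_neg at h'
  nlinarith

lemma corner_core {p q c s : ℤ} (hp0 : 0 ≤ p) (hq0 : 0 ≤ q) (h1 : p ≤ c) (h2 : q ≤ c)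
    (h3 : p + q ≤ s) (hcs : c ≤ s) (hsc : s ≤ 2*c) : p^2 + q^2 ≤ c^2 + (s-c)^2 := by
  rcases le_or_gt (p + q) c with hle | hgt
  · nlinarith
  · nlinarith [mul_nonneg (by omega : (0:ℤ) ≤ c - p) (by omega : (0:ℤ) ≤ c - q),
      mul_nonneg (by omega : (0:ℤ) ≤ s - (p+q)) (by omega : (0:ℤ) ≤ s + (p+q) - 2*c)]

lemma corner (m : ℕ) (z : GaussianInt)
    (h1 : (z.re.natAbs : ℤ) ≤ w m - 2) (h2 : (z.im.natAbs : ℤ) ≤ w m - 2)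
    (h3 : (z.re.natAbs : ℤ) + (z.im.natAbs : ℤ) ≤ w (m+1) - 3) :
    z.norm ≤ M m := by
  obtain ⟨hw1, hw2, hw3⟩ := w_facts m
  rw [norm_eq_natAbs]
  have hM : M m = (w m - 2)^2 + ((w (m+1) - 3) - (w m - 2))^2 := by rw [M]; ring_nf
  rw [hM]
  exact corner_core (by positivity) (by positivity) h1 h2 h3 (by omega) (by omega)

lemma inscribed (m : ℕ) (z : GaussianInt) (h : 2 * z.norm ≤ M m) :
    (z.re.natAbs : ℤ) ≤ w m - 2 ∧ (z.im.natAbs : ℤ) ≤ w m - 2 ∧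
      (z.re.natAbs : ℤ) + (z.im.natAbs : ℤ) ≤ w (m+1) - 3 := by
  obtain ⟨hw1, hw2, hw3⟩ := w_facts m
  rw [norm_eq_natAbs] at h
  set p : ℤ := (z.re.natAbs : ℤ) with hp
  set q : ℤ := (z.im.natAbs : ℤ) with hq
  have hp0 : 0 ≤ p := by positivity
  have hq0 : 0 ≤ q := by positivity
  have hM1 : M m ≤ 2 * (w m - 2)^2 := by
    rw [M]
    nlinarith [sq_nonneg (w (m+1) - w m - 1)]
  have hM2 : M m ≤ (w (m+1) - 3)^2 := by
    rw [M]
    nlinarith [mul_nonneg (by omega : (0:ℤ) ≤ w m - 2) (by omega : (0:ℤ) ≤ w (m+1) - w m - 1)]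
  refine ⟨?_, ?_, ?_⟩
  · exact sq_le_of_le (by omega) (by nlinarith [sq_nonneg q]) hp0
  · exact sq_le_of_le (by omega) (by nlinarith [sq_nonneg p]) hq0
  · exact sq_le_of_le (by omega) (by nlinarith [sq_nonneg (p-q)]) (by omega)








lemma two_mul_coords (a b : ℤ) : (2 * (⟨a,b⟩:GaussianInt)) = ⟨2*a, 2*b⟩ := by
  rw [Zsqrtd.ext_iff]
  simp [Zsqrtd.re_mul, Zsqrtd.im_mul]

lemma two_mul_re (t : GaussianInt) : (2*t : GaussianInt).re = 2*t.re := by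
  simp [Zsqrtd.re_mul]
lemma two_mul_im (t : GaussianInt) : (2*t : GaussianInt).im = 2*t.im := by
  simp [Zsqrtd.im_mul]

lemma digit_single_parity {v0 : GaussianInt} (h0 : v0 ∈ Dig)
    (hre : 2 ∣ v0.re) (him : 2 ∣ v0.im) : v0 = 0 := by
  rw [dig_iff] at h0
  rcases h0 with rfl|rfl|rfl|rfl|rfl
  · rfl
  all_goals (revert hre him; decide)

lemma digit_pair_parity {v0 v1 : GaussianInt} (h0 : v0 ∈ Dig) (h1 : v1 ∈ Dig)
    (hre : 2 ∣ (v0.re + (v1.re - v1.im))) (him : 2 ∣ (v0.im + (v1.re + v1.im))) :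
    v0 = 0 ∧ v1 = 0 := by
  rw [dig_iff] at h0 h1
  rcases h0 with rfl|rfl|rfl|rfl|rfl <;> rcases h1 with rfl|rfl|rfl|rfl|rfl <;>
    first
      | exact ⟨rfl, rfl⟩
      | (revert hre him; decide)

lemma pair_coords (v0 v1 : GaussianInt) :
    (v0 + v1 * ⟨1,1⟩ : GaussianInt).re = v0.re + (v1.re - v1.im) ∧
    (v0 + v1 * ⟨1,1⟩ : GaussianInt).im = v0.im + (v1.re + v1.im) := by
  constructor <;> simp [Zsqrtd.re_mul, Zsqrtd.im_mul] <;> ring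

lemma dig_coords {v : GaussianInt} (h : v ∈ Dig) : v.re.natAbs + v.im.natAbs ≤ 1 := by
  rw [dig_iff] at h
  rcases h with rfl|rfl|rfl|rfl|rfl <;> decide

lemma w0 : w 0 = 3 := by simp [w]
lemma w1 : w 1 = 4 := by simp [w]

/-- Necessity: coordinate bounds for members of `Bset n`. -/
lemma bset_bounds : ∀ (n : ℕ) (z : GaussianInt), z ∈ Bset n →
    (z.re.natAbs : ℤ) ≤ w n - 2 ∧ (z.im.natAbs : ℤ) ≤ w n - 2 ∧
      (z.re.natAbs : ℤ) + (z.im.natAbs : ℤ) ≤ w (n+1) - 3 := by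
  intro n
  induction n with
  | zero =>
      intro z hz
      obtain ⟨v, hv, rfl⟩ := hz
      rw [Finset.sum_range_one]
      have h := dig_coords (hv 0)
      have e : v 0 * (⟨1,1⟩:GaussianInt)^0 = v 0 := by simp
      rw [e, w0, w1]
      omega
  | succ n IH =>
      intro z hz
      obtain ⟨v, hv, rfl⟩ := hz
      set z' : GaussianInt := ∑ j ∈ Finset.range (n+1), v (j+1) * (⟨1,1⟩:GaussianInt)^j with hz'
      have hmem : z' ∈ Bset n := ⟨fun j => v (j+1), fun j => hv (j+1), rfl⟩
      have heq : ∑ j ∈ Finset.range (n+1+1), v j * (⟨1,1⟩:GaussianInt)^j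
          = v 0 + ⟨1,1⟩ * z' := by
        rw [Finset.sum_range_succ' _ (n+1)]
        rw [hz', Finset.mul_sum]
        simp only [pow_zero, mul_one]
        rw [add_comm]
        congr 1
        refine Finset.sum_congr rfl fun j _ => ?_
        rw [pow_succ]
        ring
      rw [heq]
      obtain ⟨h1, h2, h3⟩ := IH z' hmem
      have hd := dig_coords (hv 0)
      have hw2 : w (n+1+1) = 2 * w n := w_two_mul n
      have hwf := w_facts n
      have hre : (v 0 + ⟨1,1⟩ * z').re = (v 0).re + (z'.re - z'.im) := by
        simp [Zsqrtd.re_mul]; ring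
      have him : (v 0 + ⟨1,1⟩ * z').im = (v 0).im + (z'.re + z'.im) := by
        simp [Zsqrtd.im_mul]; ring
      rw [hre, him]
      omega

lemma sum_eq_two_digits_tail {v : ℕ → GaussianInt} (m : ℕ) :
    ∑ j ∈ Finset.range (m+3), v j * (⟨1,1⟩:GaussianInt)^j
      = v 0 + v 1 * ⟨1,1⟩ +
        2 * (⟨0,1⟩ * ∑ j ∈ Finset.range (m+1), v (j+2) * (⟨1,1⟩:GaussianInt)^j) := by
  rw [sum_two_peel]
  have key : ∀ j : ℕ, v (j+2) * (⟨1,1⟩:GaussianInt)^(j+2)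
      = (2 * ⟨0,1⟩) * (v (j+2) * (⟨1,1⟩:GaussianInt)^j) := by
    intro j
    rw [pow_add]
    have h2 : ((⟨1,1⟩:GaussianInt))^2 = 2 * ⟨0,1⟩ := by decide
    calc v (j+2) * ((⟨1,1⟩:GaussianInt)^j * (⟨1,1⟩:GaussianInt)^2)
        = (⟨1,1⟩:GaussianInt)^2 * (v (j+2) * (⟨1,1⟩:GaussianInt)^j) := by ring
      _ = (2 * ⟨0,1⟩) * (v (j+2) * (⟨1,1⟩:GaussianInt)^j) := by rw [h2]
  rw [Finset.sum_congr rfl fun j _ => key j, ← Finset.mul_sum]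
  simp only [pow_zero, pow_one, mul_one]
  ring

/-- If a member of `Bset n` is divisible by 2 and nonzero, its half is in `Bset (n-2)`. -/
lemma bset_half {n : ℕ} {z t : GaussianInt} (hz : z ∈ Bset n) (ht : z = 2 * t)
    (hz0 : z ≠ 0) : ∃ m, n = m + 2 ∧ t ∈ Bset m := by
  obtain ⟨v, hv, rfl⟩ := hz
  rcases n with _|_|m
  · exfalso
    rw [Finset.sum_range_one] at ht hz0
    have e : v 0 * (⟨1,1⟩:GaussianInt)^0 = v 0 := by simp
    rw [e] at ht hz0
    have hre := congrArg Zsqrtd.re ht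
    have him := congrArg Zsqrtd.im ht
    rw [two_mul_re] at hre
    rw [two_mul_im] at him
    exact hz0 (digit_single_parity (hv 0) ⟨t.re, hre⟩ ⟨t.im, him⟩)
  · exfalso
    have hs : ∑ j ∈ Finset.range 2, v j * (⟨1,1⟩:GaussianInt)^j
        = v 0 + v 1 * ⟨1,1⟩ := by
      rw [Finset.sum_range_succ, Finset.sum_range_one]
      simp
    rw [hs] at ht hz0
    have hre := congrArg Zsqrtd.re ht
    have him := congrArg Zsqrtd.im ht
    rw [two_mul_re, (pair_coords (v 0) (v 1)).1] at hre
    rw [two_mul_im, (pair_coords (v 0) (v 1)).2] at him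
    have hvz := digit_pair_parity (hv 0) (hv 1) ⟨t.re, hre⟩ ⟨t.im, him⟩
    rw [hvz.1, hvz.2] at hz0
    simp at hz0
  · have hs := sum_eq_two_digits_tail (v := v) m
    set T : GaussianInt := ∑ j ∈ Finset.range (m+1), v (j+2) * (⟨1,1⟩:GaussianInt)^j with hT
    rw [hs] at ht hz0
    have hmem : T ∈ Bset m := ⟨fun j => v (j+2), fun j => hv (j+2), rfl⟩
    -- v 0 + v 1 * ⟨1,1⟩ = 2 * (t - ⟨0,1⟩ * T)
    have hkey : v 0 + v 1 * ⟨1,1⟩ = 2 * (t - ⟨0,1⟩ * T) := by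
      rw [mul_sub]; rw [← ht]; ring
    have hre := congrArg Zsqrtd.re hkey
    have him := congrArg Zsqrtd.im hkey
    rw [two_mul_re, (pair_coords (v 0) (v 1)).1] at hre
    rw [two_mul_im, (pair_coords (v 0) (v 1)).2] at him
    have hvz := digit_pair_parity (hv 0) (hv 1) ⟨_, hre⟩ ⟨_, him⟩
    rw [hvz.1, hvz.2] at ht
    simp only [zero_mul, zero_add, add_zero] at ht
    have ht2 : t = ⟨0,1⟩ * T := by
      have h2 : (2:GaussianInt) ≠ 0 := by decide
      exact (mul_left_cancel₀ h2 ht.symm)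
    exact ⟨m, by ring, ht2 ▸ dig_mul_mem I_mem_dig hmem⟩

lemma bset_shift : ∀ (l : ℕ) {n : ℕ} {z u : GaussianInt}, z ∈ Bset n → z ≠ 0 →
    z = 2^l * u → ∃ m, n = m + 2*l ∧ u ∈ Bset m := by
  intro l
  induction l with
  | zero =>
      intro n z u hz h0 he
      simp only [pow_zero, one_mul] at he
      exact ⟨n, by ring_nf, he ▸ hz⟩
  | succ k ih =>
      intro n z u hz h0 he
      have he2 : z = 2 * (2^k * u) := by rw [he]; ring
      obtain ⟨m, hm, ht⟩ := bset_half hz he2 h0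
      have h0' : 2^k * u ≠ 0 := fun hc => h0 (by rw [he2, hc, mul_zero])
      obtain ⟨m', hm', hu⟩ := ih ht h0' rfl
      exact ⟨m', by omega, hu⟩

lemma extract2 : ∀ (N : ℕ) (z : GaussianInt), z ≠ 0 → z.re.natAbs + z.im.natAbs ≤ N →
    ∃ (l : ℕ) (u : GaussianInt), z = 2^l * u ∧ ¬(2 ∣ u.re ∧ 2 ∣ u.im) := by
  intro N
  induction N with
  | zero =>
      intro z hz h
      exfalso
      apply hz
      simp only [Zsqrtd.ext_iff, Zsqrtd.re_zero, Zsqrtd.im_zero]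
      constructor <;> omega
  | succ N ih =>
      intro z hz h
      by_cases hp : 2 ∣ z.re ∧ 2 ∣ z.im
      · obtain ⟨a, ha⟩ := hp.1
        obtain ⟨b, hb⟩ := hp.2
        have hzab : z = 2 * ⟨a, b⟩ := by
          rw [two_mul_coords, Zsqrtd.ext_iff]
          constructor <;> simp <;> omega
        have hz' : (⟨a,b⟩:GaussianInt) ≠ 0 := by
          intro hc
          apply hz
          rw [hzab, hc, mul_zero]
        have hab : ¬(a = 0 ∧ b = 0) := by
          intro ⟨h1, h2⟩
          exact hz' (by simp only [Zsqrtd.ext_iff, Zsqrtd.re_zero, Zsqrtd.im_zero]; exact ⟨h1, h2⟩)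
        have hle : (⟨a,b⟩:GaussianInt).re.natAbs + (⟨a,b⟩:GaussianInt).im.natAbs ≤ N := by
          simp only []
          omega
        obtain ⟨l, u, he, hu⟩ := ih ⟨a,b⟩ hz' hle
        exact ⟨l+1, u, by rw [hzab, he]; ring, hu⟩
      · exact ⟨0, z, by simp, hp⟩

lemma norm_two_pow (l : ℕ) (u : GaussianInt) : (2^l * u).norm = 4^l * u.norm := by
  induction l with
  | zero => simp
  | succ k ih =>
      have e : (2:GaussianInt)^(k+1) * u = 2 * (2^k * u) := by ring
      rw [e, Zsqrtd.norm_mul, ih, show Zsqrtd.norm (2:GaussianInt) = 4 from by decide]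
      ring

lemma odd_sq_mod4 (c : ℤ) : (2*c+1)^2 % 4 = 1 := by
  have h : (2*c+1)^2 = 1 + 4*(c^2+c) := by ring
  rw [h, Int.add_mul_emod_self_left]; decide

lemma even_sq_mod4 (c : ℤ) : (2*c)^2 % 4 = 0 := by
  have h : (2*c)^2 = 0 + 4*(c^2) := by ring
  rw [h, Int.add_mul_emod_self_left]; decide

lemma prim_norm_not_dvd {u : GaussianInt} (h : ¬(2 ∣ u.re ∧ 2 ∣ u.im)) :
    ¬ (4 ∣ u.norm) := by
  have hn : u.norm = u.re^2 + u.im^2 := by rw [Zsqrtd.norm_def]; ring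
  rcases Int.even_or_odd u.re with ⟨c, hc⟩ | ⟨c, hc⟩ <;>
    rcases Int.even_or_odd u.im with ⟨d, hd⟩ | ⟨d, hd⟩
  · exact absurd ⟨⟨c, by omega⟩, ⟨d, by omega⟩⟩ h
  · have h1 := even_sq_mod4 c
    have h2 := odd_sq_mod4 d
    rw [show c+c = 2*c from by ring] at hc
    rw [hn, hc, hd]
    omega
  · have h1 := odd_sq_mod4 c
    have h2 := even_sq_mod4 d
    rw [show d+d = 2*d from by ring] at hd
    rw [hn, hc, hd]
    omega
  · have h1 := odd_sq_mod4 c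
    have h2 := odd_sq_mod4 d
    rw [hn, hc, hd]
    omega

lemma norm_pos_of_ne_zero {u : GaussianInt} (h : u ≠ 0) : 1 ≤ u.norm := by
  have hn : u.norm = u.re^2 + u.im^2 := by rw [Zsqrtd.norm_def]; ring
  have : ¬(u.re = 0 ∧ u.im = 0) := by
    intro ⟨h1, h2⟩
    exact h (by simp only [Zsqrtd.ext_iff, Zsqrtd.re_zero, Zsqrtd.im_zero]; exact ⟨h1, h2⟩)
  have h1 : 0 ≤ u.re^2 := sq_nonneg _
  have h2 : 0 ≤ u.im^2 := sq_nonneg _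
  rcases (by tauto : u.re ≠ 0 ∨ u.im ≠ 0) with hc | hc
  · have := pow_two_pos_of_ne_zero hc  -- deprecated name?
    omega
  · have := pow_two_pos_of_ne_zero hc
    omega









lemma g1re : (1:GaussianInt).re = 1 := rfl
lemma g1im : (1:GaussianInt).im = 0 := rfl
lemma gn1re : (-1:GaussianInt).re = -1 := rfl
lemma gn1im : (-1:GaussianInt).im = 0 := rfl
lemma g0re : (0:GaussianInt).re = 0 := rfl
lemma g0im : (0:GaussianInt).im = 0 := rfl
lemma gIre : (⟨0,1⟩:GaussianInt).re = 0 := rfl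
lemma gIim : (⟨0,1⟩:GaussianInt).im = 1 := rfl
lemma gnIre : (⟨0,-1⟩:GaussianInt).re = 0 := rfl
lemma gnIim : (⟨0,-1⟩:GaussianInt).im = -1 := rfl

lemma assemble {k : ℕ} (v0 v1 : GaussianInt) (h0 : v0 ∈ Dig) (h1 : v1 ∈ Dig)
    (a b c1 c2 : ℤ)
    (hre : a = v0.re + (v1.re - v1.im) + 2*c1)
    (him : b = v0.im + (v1.re + v1.im) + 2*c2)
    (hc : (⟨c1,c2⟩ : GaussianInt) ∈ Bset k) : (⟨a,b⟩ : GaussianInt) ∈ Bset (k+2) := by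
  have h := step_mem h0 h1 hc
  have e : v0 + v1 * ⟨1,1⟩ + 2*(⟨c1,c2⟩:GaussianInt) = ⟨a,b⟩ := by
    rw [Zsqrtd.ext_iff]
    constructor
    · rw [Zsqrtd.re_add, (pair_coords v0 v1).1, two_mul_re]
      dsimp only
      omega
    · rw [Zsqrtd.im_add, (pair_coords v0 v1).2, two_mul_im]
      dsimp only
      omega
  exact e ▸ h

lemma zero_pair_mem (k : ℕ) : ((⟨0,0⟩ : GaussianInt) : GaussianInt) ∈ Bset k := zero_mem k

lemma w2 : w 2 = 6 := by norm_num [w]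

/-- main sufficiency lemma -/
lemma suff : ∀ m : ℕ, ∀ a b : ℤ, ¬(2 ∣ a ∧ 2 ∣ b) →
    (a.natAbs : ℤ) ≤ w m - 2 → (b.natAbs : ℤ) ≤ w m - 2 →
    (a.natAbs : ℤ) + (b.natAbs : ℤ) ≤ w (m+1) - 3 →
    (⟨a, b⟩ : GaussianInt) ∈ Bset m := by
  intro m
  induction m using Nat.strong_induction_on with
  | _ m IH =>
  have core : ∀ a b : ℤ, 0 ≤ a → 0 ≤ b → ¬(2 ∣ a) →
      (a.natAbs:ℤ) ≤ w m - 2 → (b.natAbs:ℤ) ≤ w m - 2 →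
      (a.natAbs:ℤ) + (b.natAbs:ℤ) ≤ w (m+1) - 3 →
      (⟨a,b⟩:GaussianInt) ∈ Bset m := by
    rcases m with _|_|k
    · -- m = 0
      intro a b ha hb hodd h1 h2 h3
      have e0 : w 0 = 3 := w0
      have e1 : w (0+1) = 4 := w1
      have hab : a = 1 ∧ b = 0 := by omega
      obtain ⟨rfl, rfl⟩ := hab
      exact dig_mem one_mem_dig
    · -- m = 1
      intro a b ha hb hodd h1 h2 h3
      have e1 : w (0+1) = 4 := w1
      have e2 : w (0+1+1) = 6 := w2
      have ha1 : a = 1 := by omega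
      subst ha1
      have hb2 : b = 0 ∨ b = 1 ∨ b = 2 := by omega
      rcases hb2 with rfl | rfl | rfl
      · exact dig_mem one_mem_dig
      · have e : (0:GaussianInt) + 1 * ⟨1,1⟩ = ⟨1,1⟩ := by decide
        exact e ▸ pair_mem zero_mem_dig one_mem_dig
      · have e : (⟨0,1⟩:GaussianInt) + 1 * ⟨1,1⟩ = ⟨1,2⟩ := by decide
        exact e ▸ pair_mem I_mem_dig one_mem_dig
    · -- m = k+2
      intro a b ha hb hodd h1 h2 h3
      have hW : w (k+1+1) = 2 * w k := w_two_mul k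
      have hV : w (k+1+1+1) = 2 * w (k+1) := w_two_mul (k+1)
      have hf : 3 ≤ w k ∧ w k + 1 ≤ w (k+1) ∧ w (k+1) + 2 ≤ 2 * w k ∧ 2 ∣ w (k+1) := by
        obtain ⟨e, he1, -, hsh⟩ := w_shape k
        rcases hsh with ⟨hx, hy⟩ | ⟨hx, hy⟩ <;> omega
      rw [hW] at h1 h2
      rw [hV] at h3
      obtain ⟨hf1, hf2, hf3, hf4⟩ := hf
      obtain ⟨c1, hc1⟩ : ∃ c, a = 2*c + 1 := ⟨a/2, by omega⟩
      have hIH := IH k (by omega)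
      rcases Int.even_or_odd b with ⟨d, hd⟩ | ⟨d, hd⟩
      · -- b even, b = 2*c2
        obtain ⟨c2, hd2⟩ : ∃ c, b = 2*c := ⟨d, by omega⟩
        by_cases hb0 : b = 0
        · -- b = 0 : greedy (1,0)
          by_cases hodd1 : ¬ 2 ∣ c1
          · refine assemble 1 0 one_mem_dig zero_mem_dig a b c1 0 ?_ ?_ ?_
            · simp only [g1re, g0re, g0im]; omega
            · simp only [g1im, g0re, g0im]; omega
            · exact hIH c1 0 (by rintro ⟨hx, -⟩; exact hodd1 hx)
                (by omega) (by omega) (by omega)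
          · push_neg at hodd1
            by_cases hz : c1 = 0
            · refine assemble 1 0 one_mem_dig zero_mem_dig a b 0 0 ?_ ?_ (zero_pair_mem k)
              · simp only [g1re, g0re, g0im]; omega
              · simp only [g1im, g0re, g0im]; omega
            · by_cases hA : a ≤ 2 * w (k+1) - 7
              · -- flip (1,2) : c = (c1, -1)
                refine assemble ⟨0,1⟩ 1 I_mem_dig one_mem_dig a b c1 (-1) ?_ ?_ ?_
                · simp only [gIre, g1re, g1im]; omega
                · simp only [gIim, g1re, g1im]; omega
                · exact hIH c1 (-1) (by rintro ⟨-, hy⟩; omega)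
                    (by omega) (by omega) (by omega)
              · exfalso; omega
        · -- b ≥ 2 even : greedy (1,2) : c = (c1, c2-1)
          by_cases hodd1 : (¬ 2 ∣ c1) ∨ (¬ 2 ∣ (c2-1))
          · refine assemble ⟨0,1⟩ 1 I_mem_dig one_mem_dig a b c1 (c2-1) ?_ ?_ ?_
            · simp only [gIre, g1re, g1im]; omega
            · simp only [gIim, g1re, g1im]; omega
            · exact hIH c1 (c2-1) (by rintro ⟨hx, hy⟩; tauto)
                (by omega) (by omega) (by omega)
          · push_neg at hodd1
            obtain ⟨he1, he2⟩ := hodd1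
            by_cases hz : c1 = 0 ∧ c2 = 1
            · refine assemble ⟨0,1⟩ 1 I_mem_dig one_mem_dig a b 0 0 ?_ ?_ (zero_pair_mem k)
              · simp only [gIre, g1re, g1im]; omega
              · simp only [gIim, g1re, g1im]; omega
            · have hsum : a + b ≤ 2 * w (k+1) - 5 := by omega
              by_cases hB : b ≤ 2 * w k - 4
              · -- A-flip (1,0) : c = (c1, c2)
                refine assemble 1 0 one_mem_dig zero_mem_dig a b c1 c2 ?_ ?_ ?_
                · simp only [g1re, g0re, g0im]; omega
                · simp only [g1im, g0re, g0im]; omega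
                · exact hIH c1 c2 (by rintro ⟨-, hy⟩; omega)
                    (by omega) (by omega) (by omega)
              · -- B-flip (-1,2) : c = (c1+1, c2-1)
                refine assemble ⟨0,1⟩ ⟨0,1⟩ I_mem_dig I_mem_dig a b (c1+1) (c2-1) ?_ ?_ ?_
                · simp only [gIre, gIim]; omega
                · simp only [gIre, gIim]; omega
                · exact hIH (c1+1) (c2-1) (by rintro ⟨hx, -⟩; omega)
                    (by omega) (by omega) (by omega)
      · -- b odd, b = 2*d+1
        obtain ⟨c2, hd2⟩ : ∃ c, b = 2*c + 1 := ⟨d, by omega⟩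
        by_cases hodd1 : (¬ 2 ∣ c1) ∨ (¬ 2 ∣ c2)
        · -- greedy (1,1) : c = (c1, c2)
          refine assemble 0 1 zero_mem_dig one_mem_dig a b c1 c2 ?_ ?_ ?_
          · simp only [g0re, g1re, g1im]; omega
          · simp only [g0im, g1re, g1im]; omega
          · exact hIH c1 c2 (by rintro ⟨hx, hy⟩; tauto)
              (by omega) (by omega) (by omega)
        · push_neg at hodd1
          obtain ⟨he1, he2⟩ := hodd1
          by_cases hz : c1 = 0 ∧ c2 = 0
          · refine assemble 0 1 zero_mem_dig one_mem_dig a b 0 0 ?_ ?_ (zero_pair_mem k)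
            · simp only [g0re, g1re, g1im]; omega
            · simp only [g0im, g1re, g1im]; omega
          · have hsum : a + b ≤ 2 * w (k+1) - 6 := by omega
            by_cases hA : a ≤ 2 * w k - 5
            · -- flip a : (-1,1) : c = (c1+1, c2)
              refine assemble 0 ⟨0,1⟩ zero_mem_dig I_mem_dig a b (c1+1) c2 ?_ ?_ ?_
              · simp only [g0re, gIre, gIim]; omega
              · simp only [g0im, gIre, gIim]; omega
              · exact hIH (c1+1) c2 (by rintro ⟨hx, -⟩; omega)
                  (by omega) (by omega) (by omega)
            · -- flip b : (1,-1) : c = (c1, c2+1)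
              refine assemble 0 ⟨0,-1⟩ zero_mem_dig negI_mem_dig a b c1 (c2+1) ?_ ?_ ?_
              · simp only [g0re, gnIre, gnIim]; omega
              · simp only [g0im, gnIre, gnIim]; omega
              · exact hIH c1 (c2+1) (by rintro ⟨-, hy⟩; omega)
                  (by omega) (by omega) (by omega)
  have key : ∀ a b : ℤ, 0 ≤ a → 0 ≤ b → ¬(2 ∣ a ∧ 2 ∣ b) →
      (a.natAbs:ℤ) ≤ w m - 2 → (b.natAbs:ℤ) ≤ w m - 2 →
      (a.natAbs:ℤ) + (b.natAbs:ℤ) ≤ w (m+1) - 3 →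
      (⟨a,b⟩:GaussianInt) ∈ Bset m := by
    intro a b ha hb hp h1 h2 h3
    by_cases hodd : 2 ∣ a
    · have hob : ¬ 2 ∣ b := fun h => hp ⟨hodd, h⟩
      have hmem := core b a hb ha hob h2 h1 (by omega)
      have hsw : (⟨a,b⟩:GaussianInt) = ⟨0,1⟩ * star ⟨b,a⟩ := by
        rw [Zsqrtd.ext_iff]
        constructor <;>
          simp [Zsqrtd.re_mul, Zsqrtd.im_mul, Zsqrtd.re_star, Zsqrtd.im_star]
      rw [hsw]
      exact dig_mul_mem I_mem_dig (star_mem hmem)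
    · exact core a b ha hb hodd h1 h2 h3
  intro a b hp h1 h2 h3
  have hpAB : ¬(2 ∣ (a.natAbs:ℤ) ∧ 2 ∣ (b.natAbs:ℤ)) := by
    rintro ⟨hx, hy⟩
    apply hp
    constructor <;> omega
  have hmem := key (a.natAbs:ℤ) (b.natAbs:ℤ) (by positivity) (by positivity) hpAB
    (by omega) (by omega) (by omega)
  have hstar : star (⟨(a.natAbs:ℤ), (b.natAbs:ℤ)⟩ : GaussianInt)
      = ⟨(a.natAbs:ℤ), -(b.natAbs:ℤ)⟩ := by
    rw [Zsqrtd.ext_iff]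
    simp [Zsqrtd.re_star, Zsqrtd.im_star]
  rcases Int.natAbs_eq a with ha | ha <;> rcases Int.natAbs_eq b with hb | hb
  · rw [ha, hb]; exact hmem
  · rw [ha, hb, show (⟨(a.natAbs:ℤ), -(b.natAbs:ℤ)⟩:GaussianInt)
      = star ⟨(a.natAbs:ℤ), (b.natAbs:ℤ)⟩ from hstar.symm]
    exact star_mem hmem
  · rw [ha, hb]
    have : (⟨-(a.natAbs:ℤ), (b.natAbs:ℤ)⟩:GaussianInt)
        = - star ⟨(a.natAbs:ℤ), (b.natAbs:ℤ)⟩ := by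
      rw [hstar, Zsqrtd.ext_iff]
      simp
    rw [this]
    exact neg_mem (star_mem hmem)
  · rw [ha, hb]
    have : (⟨-(a.natAbs:ℤ), -(b.natAbs:ℤ)⟩:GaussianInt)
        = - ⟨(a.natAbs:ℤ), (b.natAbs:ℤ)⟩ := by
      rw [Zsqrtd.ext_iff]; simp
    rw [this]
    exact neg_mem hmem



end BsetAux


open BsetAux in
theorem Bset_closed_under_divisors (n : ℕ) (x y : GaussianInt)
    (h : x * y ∈ Bset n) (hne : x * y ≠ 0) :
    x ∈ Bset n ∧ x ≠ 0 := by
  have hx0 : x ≠ 0 := fun hc => hne (by rw [hc, zero_mul])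
  have hy0 : y ≠ 0 := fun hc => hne (by rw [hc, mul_zero])
  refine ⟨?_, hx0⟩
  by_cases hyn : y.norm = 1
  · -- y is a unit
    have hyy : y * star y = 1 := by
      have := (Zsqrtd.norm_eq_mul_conj y).symm
      rw [hyn] at this
      simpa using this
    have hyD : y ∈ Dig := by
      have hn : ((y.re.natAbs:ℤ))^2 + ((y.im.natAbs:ℤ))^2 = 1 := by
        rw [← norm_eq_natAbs, hyn]
      set A := (y.re.natAbs:ℤ) with hA
      set B := (y.im.natAbs:ℤ) with hB
      have hA0 : 0 ≤ A := by positivity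
      have hB0 : 0 ≤ B := by positivity
      have hA1 : A ≤ 1 := by nlinarith
      have hB1 : B ≤ 1 := by nlinarith
      have h01 : (A = 1 ∧ B = 0) ∨ (A = 0 ∧ B = 1) := by
        have hA01 : A = 0 ∨ A = 1 := by omega
        have hB01 : B = 0 ∨ B = 1 := by omega
        rcases hA01 with h | h <;> rcases hB01 with h' | h' <;>
          rw [h, h'] at hn <;> norm_num at hn <;> tauto
      rw [dig_iff]
      rcases h01 with ⟨h1, h2⟩ | ⟨h1, h2⟩
      · have hre : y.re = 1 ∨ y.re = -1 := by omega
        have him : y.im = 0 := by omega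
        rcases hre with hre | hre
        · right; left; rw [Zsqrtd.ext_iff, g1re, g1im]; exact ⟨hre, him⟩
        · right; right; left; rw [Zsqrtd.ext_iff, gn1re, gn1im]; exact ⟨hre, him⟩
      · have hre : y.re = 0 := by omega
        have him : y.im = 1 ∨ y.im = -1 := by omega
        rcases him with him | him
        · right; right; right; left; rw [Zsqrtd.ext_iff, gIre, gIim]; exact ⟨hre, him⟩
        · right; right; right; right; rw [Zsqrtd.ext_iff, gnIre, gnIim]; exact ⟨hre, him⟩
    have hx : x = star y * (x * y) := by
      calc x = x * (y * star y) := by rw [hyy, mul_one]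
        _ = star y * (x * y) := by ring
    rw [hx]
    exact dig_mul_mem (dig_star hyD) h
  · -- y is not a unit: norm y ≥ 2
    have hNy : 2 ≤ y.norm := by
      have := norm_pos_of_ne_zero hy0
      omega
    obtain ⟨j, u, hzju, hu⟩ :=
      extract2 ((x*y).re.natAbs + (x*y).im.natAbs) (x*y) hne le_rfl
    obtain ⟨m, hnm, humem⟩ := bset_shift j h hne hzju
    have hub := bset_bounds m u humem
    have hNu : u.norm ≤ M m := corner m u hub.1 hub.2.1 hub.2.2
    obtain ⟨l, wq, hxlw, hw⟩ := extract2 (x.re.natAbs + x.im.natAbs) x hx0 le_rfl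
    have hwne : wq ≠ 0 := fun hc => hx0 (by rw [hxlw, hc, mul_zero])
    have hune : u ≠ 0 := fun hc => hne (by rw [hzju, hc, mul_zero])
    have hwpos := norm_pos_of_ne_zero hwne
    have hupos := norm_pos_of_ne_zero hune
    have hEq : 4^j * u.norm = (4^l * wq.norm) * y.norm := by
      calc 4^j * u.norm = (2^j * u).norm := (norm_two_pow j u).symm
        _ = (x * y).norm := by rw [← hzju]
        _ = x.norm * y.norm := Zsqrtd.norm_mul x y
        _ = (4^l * wq.norm) * y.norm := by rw [hxlw, norm_two_pow]
    have hlj : l ≤ j := by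
      by_contra hc
      push_neg at hc
      have hdv : (4:ℤ)^(j+1) ∣ 4^l := pow_dvd_pow 4 (by omega)
      obtain ⟨t, ht⟩ := hdv
      have h4 : (4:ℤ) ∣ u.norm := by
        have h4j : (4:ℤ)^j ≠ 0 := pow_ne_zero _ (by norm_num)
        have : (4:ℤ)^j * u.norm = 4^j * (4 * (t * (wq.norm * y.norm))) := by
          rw [hEq, ht]; ring
        have := mul_left_cancel₀ h4j this
        exact ⟨t * (wq.norm * y.norm), this⟩
      exact prim_norm_not_dvd hu h4
    obtain ⟨t, rfl⟩ : ∃ t, j = l + t := ⟨j - l, by omega⟩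
    have hineq : 2 * wq.norm ≤ 4^t * u.norm := by
      have h4l : (0:ℤ) < 4^l := by positivity
      have hcan : 4^t * u.norm = wq.norm * y.norm := by
        have : (4:ℤ)^l * (4^t * u.norm) = 4^l * (wq.norm * y.norm) := by
          rw [← mul_assoc, ← pow_add, hEq]; ring
        exact mul_left_cancel₀ (ne_of_gt h4l) this
      rw [hcan]
      nlinarith
    have hMw : 2 * wq.norm ≤ M (m + 2*t) := by
      calc 2 * wq.norm ≤ 4^t * u.norm := hineq
        _ ≤ 4^t * M m := by
            apply mul_le_mul_of_nonneg_left hNu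
            positivity
        _ ≤ M (m + 2*t) := M_lift t m
    have hreg := inscribed (m+2*t) wq hMw
    have hwmem : wq ∈ Bset (m+2*t) := suff (m+2*t) wq.re wq.im hw hreg.1 hreg.2.1 hreg.2.2
    have hmem2 := pow2_mem (l := l) hwmem
    rw [← hxlw] at hmem2
    rw [show n = m + 2*t + 2*l from by omega]
    exact hmem2
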